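/- Let Â be a Poisson superalgebra with even bracket and h ∈ Â an odd element with {h,h} = 1. Then the multiplication map φ : C⟨1,h⟩ ⊗ ker(ad_h) → Â, a ⊗ b ↦ ab, is an isomorphism of vector superspaces, and ker(ad_h) is a Poisson subalgebra of Â. -/

import Mathlib

/-- The Koszul sign `(-1)^{pq}` for parities `p q : ZMod 2`, as a complex scalar. -/
noncomputable def ssgn (p q : ZMod 2) : ℂ := (-1 : ℂ) ^ (p.val * q.val)

/-!
STATEMENT 12: Let `Â` be a Poisson superalgebra with even bracket and `h ∈ Â`
an odd element with `{h,h} = 1`.  Then the multiplication map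
`φ : ℂ⟨1,h⟩ ⊗ ker(ad_h) → Â`, `a ⊗ b ↦ ab`, is an isomorphism of vector
superspaces (every element of `Â` is uniquely `b + h·c` with
`b, c ∈ ker(ad_h)`), and `ker(ad_h)` is a Poisson subalgebra of `Â`.
-/

theorem stmt12
    {A : Type} [Ring A] [Algebra ℂ A]
    (𝒜 : ZMod 2 → Submodule ℂ A)
    (hone : (1 : A) ∈ 𝒜 0)
    (hmul : ∀ p q : ZMod 2, ∀ a b : A, a ∈ 𝒜 p → b ∈ 𝒜 q → a * b ∈ 𝒜 (p + q))
    (hsup : 𝒜 0 ⊔ 𝒜 1 = ⊤)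
    (hind : 𝒜 0 ⊓ 𝒜 1 = ⊥)
    (hscomm : ∀ p q : ZMod 2, ∀ a b : A, a ∈ 𝒜 p → b ∈ 𝒜 q →
      a * b = ssgn p q • (b * a))
    (P : A →ₗ[ℂ] A →ₗ[ℂ] A)
    (heven : ∀ p q : ZMod 2, ∀ a b : A, a ∈ 𝒜 p → b ∈ 𝒜 q → P a b ∈ 𝒜 (p + q))
    (hskew : ∀ p q : ZMod 2, ∀ a b : A, a ∈ 𝒜 p → b ∈ 𝒜 q →
      P a b = -(ssgn p q) • P b a)
    (hjacobi : ∀ p q : ZMod 2, ∀ a b : A, a ∈ 𝒜 p → b ∈ 𝒜 q → ∀ c : A,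
      P a (P b c) = P (P a b) c + ssgn p q • P b (P a c))
    (hleib : ∀ p q : ZMod 2, ∀ a b : A, a ∈ 𝒜 p → b ∈ 𝒜 q → ∀ c : A,
      P a (b * c) = P a b * c + ssgn p q • (b * P a c))
    -- the odd element h with {h,h} = 1
    (h : A) (hh : h ∈ 𝒜 1) (hhh : P h h = 1) :
    -- the multiplication map ℂ⟨1,h⟩ ⊗ ker(ad_h) → Â is bijective …
    (∀ a : A, ∃! p : A × A,
      (P h p.1 = 0 ∧ P h p.2 = 0) ∧ a = p.1 + h * p.2) ∧
    -- … and ker(ad_h) is a Poisson subalgebra of Â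
    ((1 : A) ∈ {b : A | P h b = 0} ∧
     ∀ b c : A, P h b = 0 → P h c = 0 → P h (b * c) = 0 ∧ P h (P b c) = 0) := by

  have s10 : ssgn 1 0 = 1 := by simp [ssgn]
  have s11 : ssgn 1 1 = -1 := by norm_num [ssgn, ZMod.val_one]
  have s00 : ssgn 0 0 = 1 := by simp [ssgn]
  have s01 : ssgn 0 1 = 1 := by simp [ssgn]
  -- P a 1 = 0 for homogeneous a
  have hPa1 : ∀ (q : ZMod 2) (a : A), a ∈ 𝒜 q → P a 1 = 0 := by
    intro q a ha
    have t := hleib q 0 a 1 ha hone 1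
    have sq0 : ssgn q 0 = 1 := by simp [ssgn]
    rw [sq0, one_smul, mul_one, mul_one, one_mul] at t
    exact left_eq_add.mp t
  -- decomposition into homogeneous parts
  have hdec : ∀ a : A, ∃ a0 ∈ 𝒜 0, ∃ a1 ∈ 𝒜 1, a = a0 + a1 := by
    intro a
    have ha : a ∈ 𝒜 0 ⊔ 𝒜 1 := by rw [hsup]; exact Submodule.mem_top
    rcases Submodule.mem_sup.mp ha with ⟨y, hy, z, hz, hyz⟩
    exact ⟨y, hy, z, hz, hyz.symm⟩
  -- P 1 c = 0 for all c
  have hP1 : ∀ c : A, P (1 : A) c = 0 := by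
    intro c
    rcases hdec c with ⟨c0, hc0, c1, hc1, rfl⟩
    have t0 : P (1 : A) c0 = 0 := by
      rw [hskew 0 0 1 c0 hone hc0, s00, hPa1 0 c0 hc0, smul_zero]
    have t1 : P (1 : A) c1 = 0 := by
      rw [hskew 0 1 1 c1 hone hc1, s01, hPa1 1 c1 hc1, smul_zero]
    rw [map_add, t0, t1, add_zero]
  -- ad_h squared is zero
  have hsq : ∀ c : A, P h (P h c) = 0 := by
    intro c
    have j := hjacobi 1 1 h h hh hh c
    rw [hhh, s11, hP1, zero_add, neg_smul, one_smul] at j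
    have h2 : P h (P h c) + P h (P h c) = 0 := by
      nth_rewrite 2 [j]; exact add_neg_cancel _
    calc P h (P h c) = (2⁻¹ : ℂ) • ((2 : ℂ) • P h (P h c)) := by
          rw [smul_smul]; norm_num
      _ = (2⁻¹ : ℂ) • (P h (P h c) + P h (P h c)) := by rw [two_smul]
      _ = 0 := by rw [h2, smul_zero]
  -- key identity: a = P h (h*a) + h * P h a
  have hkey : ∀ a : A, a = P h (h * a) + h * P h a := by
    intro a
    have t := hleib 1 1 h h hh hh a
    rw [hhh, s11, one_mul, neg_smul, one_smul] at t
    rw [t]; abel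
  constructor
  · intro a
    refine ⟨(P h (h * a), P h a), ⟨⟨hsq (h * a), hsq a⟩, hkey a⟩, ?_⟩
    rintro ⟨b, c⟩ ⟨⟨hb, hc⟩, rfl⟩
    dsimp only at hb hc ⊢
    have hc' : P h (b + h * c) = c := by
      have t := hleib 1 1 h h hh hh c
      rw [hhh, s11, one_mul, neg_smul, one_smul, hc, mul_zero, neg_zero,
        add_zero] at t
      rw [map_add, hb, zero_add, t]
    have hb' : b = P h (h * (b + h * c)) := by
      have k := hkey (b + h * c)
      rw [hc'] at k
      exact add_right_cancel k
    exact Prod.ext hb' hc'.symm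
  · refine ⟨hPa1 1 h hh, ?_⟩
    intro b c hb hc
    rcases hdec b with ⟨b0, hb0, b1, hb1, rfl⟩
    have hbsum : P h b0 + P h b1 = P h (b0 + b1) := (map_add (P h) b0 b1).symm
    constructor
    · have t0 := hleib 1 0 h b0 hh hb0 c
      have t1 := hleib 1 1 h b1 hh hb1 c
      rw [s10, one_smul, hc, mul_zero, add_zero] at t0
      rw [s11, hc, mul_zero, smul_zero, add_zero] at t1
      rw [add_mul, map_add, t0, t1, ← add_mul, hbsum, hb, zero_mul]
    · have j0 := hjacobi 1 0 h b0 hh hb0 c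
      have j1 := hjacobi 1 1 h b1 hh hb1 c
      rw [hc, map_zero, smul_zero, add_zero] at j0 j1
      have hadd : P (b0 + b1) c = P b0 c + P b1 c := by
        rw [map_add]; rfl
      rw [hadd, map_add, j0, j1, ← LinearMap.add_apply, ← map_add, hbsum, hb,
        map_zero, LinearMap.zero_apply]
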